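/- arXiv:2401.08144 — 4 statements merged into one kernel-verified Lean document; each statement's English description precedes it below -/
import Mathlib

section
/- Let s : E × F → ℝ be twice continuously differentiable and, for each fixed x ∈ F, μ-strongly convex in its first argument with μ > 0. Let y* : F → E be a differentiable map satisfying the first-order optimality condition ∇_y s(y*(x), x) = 0 for every x ∈ F. Then for every x ∈ F the Hessian ∇²_{yy} s(y*(x), x) (as a self-adjoint linear map on E) is invertible, the derivative of y* satisfies ∇²_{yy} s(y*(x), x) ∘ D y*(x) + ∂_x(∇_y s)(y*(x), x) = 0, and hence D y*(x) = −(∇²_{yy} s(y*(x), x))⁻¹ ∘ ∂_x(∇_y s)(y*(x), x). -/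
open RealInnerProductSpace

set_option maxHeartbeats 1000000 in
/-- Implicit differentiation of the follower's best response (Lemma 1):
the Hessian of `s` in its first argument at `(y*(x), x)` is invertible,
`D y*(x)` satisfies the implicit equation, and hence equals
`-(Hessian)⁻¹ ∘ ∂ₓ(∇_y s)`. -/
theorem stmt0
    {E F : Type*} [NormedAddCommGroup E] [InnerProductSpace ℝ E] [FiniteDimensional ℝ E]
    [NormedAddCommGroup F] [InnerProductSpace ℝ F] [FiniteDimensional ℝ F]
    (s : E × F → ℝ) (μ : ℝ) (hμ : 0 < μ)
    (hs : ContDiff ℝ 2 s)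
    (hconv : ∀ x : F, ConvexOn ℝ Set.univ (fun y : E => s (y, x) - μ / 2 * ‖y‖ ^ 2))
    (ystar : F → E) (hy : Differentiable ℝ ystar)
    (hopt : ∀ x : F, gradient (fun y => s (y, x)) (ystar x) = 0) (x : F) :
    ∃ Hinv : E →L[ℝ] E,
      (fderiv ℝ (fun y => gradient (fun y' => s (y', x)) y) (ystar x)).comp Hinv
          = ContinuousLinearMap.id ℝ E ∧
      Hinv.comp (fderiv ℝ (fun y => gradient (fun y' => s (y', x)) y) (ystar x))
          = ContinuousLinearMap.id ℝ E ∧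
      (fderiv ℝ (fun y => gradient (fun y' => s (y', x)) y) (ystar x)).comp (fderiv ℝ ystar x)
          + fderiv ℝ (fun x' => gradient (fun y' => s (y', x')) (ystar x)) x = 0 ∧
      fderiv ℝ ystar x
          = -(Hinv.comp (fderiv ℝ (fun x' => gradient (fun y' => s (y', x')) (ystar x)) x)) := by
  classical
  set g : E × F → E := fun q => (InnerProductSpace.toDual ℝ E).symm
      ((fderiv ℝ s q).comp (ContinuousLinearMap.inl ℝ E F)) with hgdef
  have hsd : Differentiable ℝ s := hs.differentiable (by norm_num)
  -- g agrees with the partial gradient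
  have hpart : ∀ (y : E) (x' : F), HasFDerivAt (fun y' : E => s (y', x'))
      ((fderiv ℝ s (y, x')).comp (ContinuousLinearMap.inl ℝ E F)) y := fun y x' =>
    (hsd (y, x')).hasFDerivAt.comp y (hasFDerivAt_prodMk_left y x')
  have hgrad : ∀ (y : E) (x' : F), gradient (fun y' => s (y', x')) y = g (y, x') := by
    intro y x'
    rw [gradient, (hpart y x').fderiv]
  -- g is C¹
  have hg : ContDiff ℝ 1 g := by
    have h2 : ContDiff ℝ 1 (fderiv ℝ s) := hs.fderiv_right (by norm_num)
    let A : ((E × F) →L[ℝ] ℝ) →L[ℝ] (E →L[ℝ] ℝ) :=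
      (ContinuousLinearMap.compL ℝ E (E × F) ℝ).flip (ContinuousLinearMap.inl ℝ E F)
    let B : (E →L[ℝ] ℝ) →L[ℝ] E :=
      (InnerProductSpace.toDual ℝ E).symm.toContinuousLinearEquiv.toContinuousLinearMap
    have : g = fun q => (B.comp A) (fderiv ℝ s q) := rfl
    rw [this]
    exact (B.comp A).contDiff.comp h2
  have hgd : Differentiable ℝ g := hg.differentiable (by norm_num)
  set y0 : E := ystar x with hy0
  set p : E × F := (y0, x) with hp
  set Hm : E →L[ℝ] E := (fderiv ℝ g p).comp (ContinuousLinearMap.inl ℝ E F) with hHm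
  set Pm : F →L[ℝ] E := (fderiv ℝ g p).comp (ContinuousLinearMap.inr ℝ E F) with hPm
  have hH : HasFDerivAt (fun y => g (y, x)) Hm y0 :=
    ((hgd p).hasFDerivAt.comp y0 (hasFDerivAt_prodMk_left (𝕜 := ℝ) y0 x) :)
  have hP : HasFDerivAt (fun x' => g (y0, x')) Pm x :=
    ((hgd p).hasFDerivAt.comp x (hasFDerivAt_prodMk_right (𝕜 := ℝ) y0 x) :)
  -- rewrite the fderivs in the statement
  have hfy : (fun y => gradient (fun y' => s (y', x)) y) = fun y => g (y, x) :=
    funext fun y => hgrad y x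
  have hfx : (fun x' => gradient (fun y' => s (y', x')) (ystar x)) = fun x' => g (y0, x') :=
    funext fun x' => hgrad y0 x'
  have e1 : fderiv ℝ (fun y => gradient (fun y' => s (y', x)) y) (ystar x) = Hm := by
    rw [hfy]; exact hH.fderiv
  have e2 : fderiv ℝ (fun x' => gradient (fun y' => s (y', x')) (ystar x)) x = Pm := by
    rw [hfx]; exact hP.fderiv
  -- implicit equation
  set Dy : F →L[ℝ] E := fderiv ℝ ystar x with hDy
  have hline : HasFDerivAt (fun x' => (ystar x', x')) (Dy.prod (ContinuousLinearMap.id ℝ F)) x :=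
    (hy x).hasFDerivAt.prodMk (hasFDerivAt_id x)
  have hcomp := HasFDerivAt.comp (f := fun x' : F => (ystar x', x')) x (hgd p).hasFDerivAt hline
  have hzero : (g ∘ fun x' : F => (ystar x', x')) = fun _ => (0 : E) :=
    funext fun x' => by
      show g (ystar x', x') = 0
      rw [← hgrad]; exact hopt x'
  have hc0 : (fderiv ℝ g p).comp (Dy.prod (ContinuousLinearMap.id ℝ F)) = 0 := by
    rw [hzero] at hcomp
    exact hcomp.unique (hasFDerivAt_const 0 x)
  have himp : Hm.comp Dy + Pm = 0 := by
    ext v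
    have h0 : (fderiv ℝ g p) (Dy v, v) = 0 := ContinuousLinearMap.ext_iff.mp hc0 v
    have hv : ((Dy v, v) : E × F) = (Dy v, (0 : F)) + ((0 : E), v) := by simp
    rw [hv, map_add] at h0
    simpa [Hm, Pm] using h0
  -- coercivity of Hm
  have hcoer : ∀ v : E, μ * ‖v‖ ^ 2 ≤ ⟪Hm v, v⟫ := by
    intro v
    set φ : ℝ → ℝ := fun t => s (y0 + t • v, x) - μ / 2 * ‖y0 + t • v‖ ^ 2 with hφdef
    have hφc : ConvexOn ℝ Set.univ φ := by
      have h := (hconv x).comp_affineMap (AffineMap.lineMap y0 (y0 + v) : ℝ →ᵃ[ℝ] E)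
      have heq : (fun y : E => s (y, x) - μ / 2 * ‖y‖ ^ 2) ∘ (AffineMap.lineMap y0 (y0 + v)) = φ := by
        funext t
        simp [AffineMap.lineMap_apply, add_sub_cancel_left, add_comm, φ]
      rwa [Set.preimage_univ, heq] at h
    have hlin : ∀ t : ℝ, HasDerivAt (fun t : ℝ => y0 + t • v) v t := fun t => by
      simpa using ((hasDerivAt_id t).smul_const v).const_add y0
    have hsline : ∀ t : ℝ, HasDerivAt (fun t : ℝ => s (y0 + t • v, x))
        ⟪g (y0 + t • v, x), v⟫ t := by
      intro t
      have h1 := (hpart (y0 + t • v) x).comp_hasDerivAt t (hlin t)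
      refine h1.congr_deriv ?_; symm
      rw [hgdef]
      simp only [InnerProductSpace.toDual_symm_apply]
    have hq : ∀ t : ℝ, μ / 2 * ‖y0 + t • v‖ ^ 2
        = μ / 2 * ‖y0‖ ^ 2 + μ * ⟪y0, v⟫ * t + μ / 2 * ‖v‖ ^ 2 * t ^ 2 := by
      intro t
      rw [norm_add_sq_real, real_inner_smul_right, norm_smul, Real.norm_eq_abs, mul_pow, sq_abs]
      ring
    have hφd : ∀ t : ℝ, HasDerivAt φ
        (⟪g (y0 + t • v, x), v⟫ - (μ * ⟪y0, v⟫ + μ * ‖v‖ ^ 2 * t)) t := by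
      intro t
      have h2 : HasDerivAt (fun t : ℝ => μ / 2 * ‖y0 + t • v‖ ^ 2)
          (μ * ⟪y0, v⟫ + μ * ‖v‖ ^ 2 * t) t := by
        have hfe : (fun t : ℝ => μ / 2 * ‖y0 + t • v‖ ^ 2)
            = fun t => μ / 2 * ‖y0‖ ^ 2 + μ * ⟪y0, v⟫ * t + μ / 2 * ‖v‖ ^ 2 * t ^ 2 :=
          funext fun t => hq t
        rw [hfe]
        have hA : HasDerivAt (fun t : ℝ => μ / 2 * ‖y0‖ ^ 2 + μ * ⟪y0, v⟫ * t)
            (μ * ⟪y0, v⟫) t := by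
          simpa using ((hasDerivAt_id t).const_mul (μ * ⟪y0, v⟫)).const_add (μ / 2 * ‖y0‖ ^ 2)
        have hB : HasDerivAt (fun t : ℝ => μ / 2 * ‖v‖ ^ 2 * t ^ 2)
            (μ / 2 * ‖v‖ ^ 2 * (2 * t)) t := by
          simpa using (hasDerivAt_pow 2 t).const_mul (μ / 2 * ‖v‖ ^ 2)
        refine (hA.add hB).congr_deriv ?_
        ring
      exact (hsline t).sub h2
    have hmono := hφc.monotoneOn_deriv (fun t _ => (hφd t).differentiableAt)
    have hkey : ∀ t : ℝ, 0 ≤ t →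
        μ * ‖v‖ ^ 2 * t ≤ ⟪g (y0 + t • v, x) - g (y0, x), v⟫ := by
      intro t ht
      have h := hmono (Set.mem_univ 0) (Set.mem_univ t) ht
      rw [(hφd 0).deriv, (hφd t).deriv] at h
      have h00 : y0 + (0 : ℝ) • v = y0 := by simp
      rw [h00] at h
      rw [inner_sub_left]
      linarith
    have hgyd : HasDerivAt (fun t : ℝ => g (y0 + t • v, x)) (Hm v) 0 := by
      have hf : HasFDerivAt (fun y => g (y, x)) Hm (y0 + (0 : ℝ) • v) := by simpa using hH
      exact hf.comp_hasDerivAt 0 (hlin 0)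
    set Q : ℝ → ℝ := fun t => ⟪g (y0 + t • v, x) - g (y0, x), v⟫ with hQdef
    have hqd : HasDerivAt Q ⟪Hm v, v⟫ 0 := by
      have := HasDerivAt.inner ℝ (hgyd.sub_const (g (y0, x))) (hasDerivAt_const 0 v)
      simpa using this
    have hslope := hasDerivAt_iff_tendsto_slope.mp hqd
    have hsub : nhdsWithin (0:ℝ) (Set.Ioi 0) ≤ nhdsWithin (0:ℝ) {(0:ℝ)}ᶜ :=
      nhdsWithin_mono 0 (fun t ht => ne_of_gt ht)
    have htend : Filter.Tendsto (slope Q 0) (nhdsWithin 0 (Set.Ioi 0)) (nhds ⟪Hm v, v⟫) :=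
      hslope.mono_left hsub
    refine ge_of_tendsto htend ?_
    filter_upwards [self_mem_nhdsWithin] with t ht
    have ht0 : (0:ℝ) < t := ht
    have hQ0 : Q 0 = 0 := by simp [Q]
    have hst : slope Q 0 t = Q t / t := by
      rw [slope_def_field, hQ0]
      rw [sub_zero, sub_zero]
    rw [hst, le_div_iff₀ ht0]
    exact hkey t ht0.le
  -- invertibility
  have hinj : Function.Injective Hm := by
    intro a b hab
    have h := hcoer (a - b)
    rw [map_sub, hab, sub_self, inner_zero_left] at h
    by_contra hne
    have hpos : 0 < ‖a - b‖ := norm_pos_iff.mpr (sub_ne_zero.mpr hne)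
    exact absurd h (not_le.mpr (mul_pos hμ (pow_pos hpos 2)))
  have hsurj : Function.Surjective Hm :=
    (LinearMap.injective_iff_surjective (f := (Hm : E →ₗ[ℝ] E))).mp hinj
  let e : E ≃ₗ[ℝ] E := LinearEquiv.ofBijective (Hm : E →ₗ[ℝ] E) ⟨hinj, hsurj⟩
  let Hinv : E →L[ℝ] E := LinearMap.toContinuousLinearMap (e.symm : E →ₗ[ℝ] E)
  have hHinv : ∀ w, Hinv w = e.symm w := fun w => rfl
  have hHe : ∀ w, Hm w = e w := fun w => rfl
  refine ⟨Hinv, ?_, ?_, ?_, ?_⟩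
  · rw [e1]; ext w
    show Hm (Hinv w) = w
    rw [hHinv, hHe]
    exact e.apply_symm_apply w
  · rw [e1]; ext w
    show Hinv (Hm w) = w
    rw [hHinv, hHe w]
    exact e.symm_apply_apply w
  · rw [e1, e2]; exact himp
  · rw [e2]
    ext w
    have h := ContinuousLinearMap.ext_iff.mp himp w
    simp only [ContinuousLinearMap.add_apply, ContinuousLinearMap.comp_apply,
      ContinuousLinearMap.zero_apply] at h
    show Dy w = -((Hinv.comp Pm) w)
    have hpw : Pm w = -(Hm (Dy w)) := eq_neg_of_add_eq_zero_right h
    rw [ContinuousLinearMap.comp_apply, hpw, hHinv, map_neg, hHe (Dy w),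
      e.symm_apply_apply, neg_neg]
end

section
/- Let s : E × F → ℝ be continuously differentiable such that for each fixed x ∈ F the function y ↦ s(y, x) is μ-strongly convex (μ > 0), and suppose the gradient is ℓ-Lipschitz in the second argument uniformly in the first: ‖∇_y s(y, x) − ∇_y s(y, x̄)‖ ≤ ℓ‖x − x̄‖ for all y ∈ E and x, x̄ ∈ F. Let y*(x) denote the unique minimizer over E of y ↦ s(y, x). Then the best-response map y* is (ℓ/μ)-Lipschitz: ‖y*(x) − y*(x̄)‖ ≤ (ℓ/μ)‖x − x̄‖ for all x, x̄ ∈ F. -/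
open Set InnerProductSpace

local notation "⟪" x ", " y "⟫" => @inner ℝ _ _ x y

/-- Gradient inequality for a convex differentiable function on the whole space:
`⟪∇g a, b - a⟫ ≤ g b - g a`. -/
lemma conv_grad_aux {E : Type*} [NormedAddCommGroup E] [InnerProductSpace ℝ E]
    [CompleteSpace E] {g : E → ℝ} (hg : ConvexOn ℝ Set.univ g) {a b ga : E}
    (hga : HasGradientAt g ga a) :
    ⟪ga, b - a⟫ ≤ g b - g a := by
  rcases eq_or_ne b a with rfl | hba
  · simp
  · -- restrict to the segment through `a` and `b`
    set φ : ℝ → ℝ := fun t => g (t • (b - a) + a) with hφ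
    have hφconv : ConvexOn ℝ Set.univ φ := by
      have := hg.comp_affineMap (AffineMap.lineMap a b : ℝ →ᵃ[ℝ] E)
      have heq : (g ∘ (AffineMap.lineMap a b : ℝ →ᵃ[ℝ] E)) = φ := by
        funext t
        simp [hφ, AffineMap.lineMap_apply, Function.comp]
      rw [heq] at this
      simpa using this
    have hF : HasFDerivAt g (toDual ℝ E ga) a := hga
    have hline : HasDerivAt (fun t : ℝ => t • (b - a) + a) ((1 : ℝ) • (b - a)) 0 :=
      ((hasDerivAt_id (0 : ℝ)).smul_const (b - a)).add_const a
    have hφ0 : HasDerivAt φ (⟪ga, b - a⟫) 0 := by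
      have hF' : HasFDerivAt g (toDual ℝ E ga) ((0 : ℝ) • (b - a) + a) := by
        simpa using hF
      have hcomp := hF'.comp_hasDerivAt (0 : ℝ)
        (by simpa using hline : HasDerivAt (fun t : ℝ => t • (b - a) + a) (b - a) 0)
      simp only [toDual_apply_apply] at hcomp
      exact hcomp
    have hslope := hφconv.le_slope_of_hasDerivAt (mem_univ (0 : ℝ)) (mem_univ (1 : ℝ))
      one_pos hφ0
    have h01 : slope φ 0 1 = g b - g a := by
      simp [slope, hφ]
    rw [h01] at hslope
    exact hslope

/-- Lipschitz continuity of the followers' best-response map: if `s(·, x)` is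
`μ`-strongly convex and `∇_y s` is `ℓ`-Lipschitz in the second argument uniformly
in the first, then the best-response map `y*` is `(ℓ/μ)`-Lipschitz. -/
theorem stmt1
    {E F : Type*} [NormedAddCommGroup E] [InnerProductSpace ℝ E] [FiniteDimensional ℝ E]
    [NormedAddCommGroup F] [InnerProductSpace ℝ F] [FiniteDimensional ℝ F]
    (s : E × F → ℝ) (μ ℓ : ℝ) (hμ : 0 < μ)
    (hs : ContDiff ℝ 1 s)
    (hconv : ∀ x : F, ConvexOn ℝ Set.univ (fun y : E => s (y, x) - μ / 2 * ‖y‖ ^ 2))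
    (hlip : ∀ (y : E) (x xb : F),
      ‖gradient (fun y' => s (y', x)) y - gradient (fun y' => s (y', xb)) y‖ ≤ ℓ * ‖x - xb‖)
    (ystar : F → E)
    (hmin : ∀ (x : F) (y : E), s (ystar x, x) ≤ s (y, x)) :
    ∀ x xb : F, ‖ystar x - ystar xb‖ ≤ ℓ / μ * ‖x - xb‖ := by
  -- differentiability of each partial function
  have hdiff : ∀ x : F, Differentiable ℝ (fun y : E => s (y, x)) := by
    intro x
    exact (hs.differentiable one_ne_zero).comp (differentiable_id.prodMk (differentiable_const x))
  -- gradient of each partial function exists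
  have hgrad : ∀ (x : F) (y : E),
      HasGradientAt (fun y' : E => s (y', x)) (gradient (fun y' : E => s (y', x)) y) y :=
    fun x y => ((hdiff x) y).hasGradientAt
  -- gradient of `μ/2 ‖·‖²`
  have hq : ∀ y : E, HasFDerivAt (fun y' : E => μ / 2 * ‖y'‖ ^ 2) (toDual ℝ E (μ • y)) y := by
    intro y
    have h1 : HasFDerivAt (fun y' : E => ⟪y', y'⟫)
        ((fderivInnerCLM ℝ (y, y)).comp ((ContinuousLinearMap.id ℝ E).prod
          (ContinuousLinearMap.id ℝ E))) y :=
      (hasFDerivAt_id y).inner ℝ (hasFDerivAt_id y)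
    have h2 := h1.const_mul (μ / 2)
    have heq : (fun y' : E => μ / 2 * ⟪y', y'⟫) = fun y' : E => μ / 2 * ‖y'‖ ^ 2 := by
      funext y'
      rw [real_inner_self_eq_norm_sq]
    rw [heq] at h2
    refine h2.congr_fderiv ?_
    ext v
    simp [fderivInnerCLM_apply, real_inner_comm, real_inner_smul_left]
    ring
  -- gradient of the convexified function
  have hgd : ∀ (x : F) (y : E),
      HasGradientAt (fun y' : E => s (y', x) - μ / 2 * ‖y'‖ ^ 2)
        (gradient (fun y' : E => s (y', x)) y - μ • y) y := by
    intro x y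
    have hF : HasFDerivAt (fun y' : E => s (y', x))
        (toDual ℝ E (gradient (fun y' : E => s (y', x)) y)) y := hgrad x y
    have := hF.sub (hq y)
    rw [hasGradientAt_iff_hasFDerivAt, map_sub]
    exact this
  -- gradient is zero at the minimizer
  have hzero : ∀ x : F, gradient (fun y' : E => s (y', x)) (ystar x) = 0 := by
    intro x
    have hlm : IsLocalMin (fun y' : E => s (y', x)) (ystar x) :=
      Filter.Eventually.of_forall fun y => hmin x y
    have hfd := hlm.fderiv_eq_zero
    rw [gradient, hfd, map_zero]
  -- nonnegativity of the RHS
  intro x xb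
  have hRHSnonneg : 0 ≤ ℓ * ‖x - xb‖ :=
    le_trans (norm_nonneg _) (hlip (ystar x) x xb)
  set a := ystar x with ha
  set b := ystar xb with hb
  rcases eq_or_ne a b with hab | hab
  · rw [hab, sub_self, norm_zero]
    rw [div_mul_eq_mul_div]
    exact div_nonneg hRHSnonneg hμ.le
  · -- monotonicity of the gradient of the convexified function for parameter `x`
    set v : E := gradient (fun y' : E => s (y', x)) b with hv
    have h1 : ⟪(0 : E) - μ • a, b - a⟫ ≤
        (s (b, x) - μ / 2 * ‖b‖ ^ 2) - (s (a, x) - μ / 2 * ‖a‖ ^ 2) := by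
      have := conv_grad_aux (hconv x) (a := a) (b := b)
        (ga := gradient (fun y' : E => s (y', x)) a - μ • a) (hgd x a)
      rwa [ha, hzero x, ← ha] at this
    have h2 : ⟪v - μ • b, a - b⟫ ≤
        (s (a, x) - μ / 2 * ‖a‖ ^ 2) - (s (b, x) - μ / 2 * ‖b‖ ^ 2) :=
      conv_grad_aux (hconv x) (a := b) (b := a) (ga := v - μ • b) (hgd x b)
    have hsum : ⟪(0 : E) - μ • a, b - a⟫ + ⟪v - μ • b, a - b⟫ ≤ 0 := by linarith
    have hkey : μ * ‖b - a‖ ^ 2 ≤ ⟪v, b - a⟫ := by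
      have hexp : ⟪(0 : E) - μ • a, b - a⟫ + ⟪v - μ • b, a - b⟫
          = μ * ‖b - a‖ ^ 2 - ⟪v, b - a⟫ := by
        have h3 : (a : E) - b = -(b - a) := by abel
        rw [h3]
        rw [inner_sub_left, inner_sub_left, inner_neg_right, inner_neg_right,
          real_inner_smul_left, real_inner_smul_left, inner_zero_left]
        have h4 : ⟪b - a, b - a⟫ = ‖b - a‖ ^ 2 := real_inner_self_eq_norm_sq _
        have h5 : ⟪a, b - a⟫ + ⟪b - a, b - a⟫ = ⟪b, b - a⟫ := by
          rw [← inner_add_left]; congr 1; abel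
        nlinarith [h4, h5]
      linarith [hsum, hexp.symm.le]
    -- bound ⟪v, b-a⟫ using Cauchy–Schwarz and the Lipschitz hypothesis
    have hvnorm : ‖v‖ ≤ ℓ * ‖x - xb‖ := by
      have := hlip b x xb
      rwa [hb, hzero xb, ← hb, sub_zero] at this
    have hcs : ⟪v, b - a⟫ ≤ ‖v‖ * ‖b - a‖ := real_inner_le_norm v (b - a)
    have hba : (0 : ℝ) < ‖b - a‖ := by
      rw [norm_pos_iff, sub_ne_zero]
      exact fun h => hab h.symm
    have hfin : μ * ‖b - a‖ ≤ ℓ * ‖x - xb‖ := by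
      have : μ * ‖b - a‖ * ‖b - a‖ ≤ (ℓ * ‖x - xb‖) * ‖b - a‖ := by
        calc μ * ‖b - a‖ * ‖b - a‖ = μ * ‖b - a‖ ^ 2 := by ring
          _ ≤ ⟪v, b - a⟫ := hkey
          _ ≤ ‖v‖ * ‖b - a‖ := hcs
          _ ≤ (ℓ * ‖x - xb‖) * ‖b - a‖ :=
            mul_le_mul_of_nonneg_right hvnorm hba.le
      exact le_of_mul_le_mul_right this hba
    rw [norm_sub_rev]
    rw [div_mul_eq_mul_div, le_div_iff₀ hμ]
    calc ‖b - a‖ * μ = μ * ‖b - a‖ := by ring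
      _ ≤ ℓ * ‖x - xb‖ := hfin
end

section
/- Let s : E × F → ℝ be twice continuously differentiable and μ-strongly convex in its first argument for each fixed x (μ > 0), let y* : F → E be differentiable with ∇_y s(y*(x), x) = 0 for all x, and let θ : F × E → ℝ be continuously differentiable. Define Φ : F → ℝ by Φ(x) := θ(x, y*(x)). Then Φ is differentiable and its gradient (the hyper-gradient) is given by ∇Φ(x) = ∇_x θ(x, y*(x)) − (∂_x(∇_y s)(y*(x), x))* ∘ (∇²_{yy} s(y*(x), x))⁻¹ (∇_y θ(x, y*(x))), where (·)* denotes the adjoint of a linear map and the inverse exists because ∇²_{yy} s(y*(x), x) ⪰ μ·I. -/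
set_option maxHeartbeats 1000000
open InnerProductSpace ContinuousLinearMap RealInnerProductSpace

lemma aux_deriv_nonneg_of_monotone {ψ : ℝ → ℝ} {c : ℝ} (hm : Monotone ψ)
    (h : HasDerivAt ψ c 0) : 0 ≤ c := by
  have h' := hasDerivAt_iff_tendsto_slope.1 h
  have h'' : Filter.Tendsto (slope ψ 0) (nhdsWithin 0 (Set.Ioi 0)) (nhds c) :=
    h'.mono_left (nhdsWithin_mono _ (fun t ht => ne_of_gt ht))
  refine ge_of_tendsto h'' ?_
  filter_upwards [self_mem_nhdsWithin] with t ht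
  have ht' : (0:ℝ) < t := ht
  have hψ : ψ 0 ≤ ψ t := hm (le_of_lt ht')
  rw [slope_def_field]
  have h0 : 0 ≤ ψ t - ψ 0 := by linarith
  have := div_nonneg h0 (by linarith : (0:ℝ) ≤ t - 0)
  simpa [div_eq_mul_inv, sub_zero] using this

lemma aux_coercive {E : Type*} [NormedAddCommGroup E] [InnerProductSpace ℝ E]
    [FiniteDimensional ℝ E]
    (g : E → ℝ) (μ : ℝ) (hg : ContDiff ℝ 2 g)
    (hconv : ConvexOn ℝ Set.univ (fun y : E => g y - μ / 2 * ‖y‖ ^ 2))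
    (y₀ v : E) :
    μ * ‖v‖ ^ 2 ≤ ⟪(fderiv ℝ (fun y => gradient g y) y₀) v, v⟫ := by
  set w : E → E := fun y => gradient g y with hw
  have hgrad : ContDiff ℝ 1 w :=
    ((toDual ℝ E).symm.toContinuousLinearEquiv.toContinuousLinearMap).contDiff.comp
      (hg.fderiv_right (by norm_num))
  set l : ℝ → E := fun t => t • v + y₀ with hldef
  have hl : ∀ t : ℝ, HasDerivAt l v t := by
    intro t
    simpa [hldef] using ((hasDerivAt_id t).smul_const v).add_const y₀
  set ψ : ℝ → ℝ := fun t => ⟪w (l t), v⟫ - μ / 2 * (⟪l t, v⟫ + ⟪v, l t⟫) with hψdef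
  set φ : ℝ → ℝ := fun t => g (l t) - μ / 2 * ‖l t‖ ^ 2 with hφdef
  have hφconv : ConvexOn ℝ Set.univ φ := by
    have h := hconv.comp_affineMap (AffineMap.lineMap y₀ (y₀ + v))
    have hfun : ((fun y => g y - μ / 2 * ‖y‖ ^ 2) ∘ ⇑(AffineMap.lineMap y₀ (y₀ + v))) = φ := by
      funext t
      simp [hφdef, hldef, AffineMap.lineMap_apply, vsub_eq_sub, vadd_eq_add,
        add_sub_cancel_left]
    rw [hfun] at h
    simpa using h
  have hinner_eq : ∀ y u : E, ⟪w y, u⟫ = fderiv ℝ g y u := by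
    intro y u
    simp [hw, gradient, toDual_symm_apply]
  have hφ' : ∀ t, HasDerivAt φ (ψ t) t := by
    intro t
    have h1 : HasDerivAt (fun t => g (l t)) (fderiv ℝ g (l t) v) t :=
      ((hg.differentiable (by norm_num) (l t)).hasFDerivAt).comp_hasDerivAt t (hl t)
    have h2 : HasDerivAt (fun t => μ / 2 * (⟪l t, l t⟫ : ℝ)) (μ / 2 * (⟪l t, v⟫ + ⟪v, l t⟫)) t :=
      (((hl t).inner ℝ (hl t))).const_mul (μ / 2)
    have h2' : HasDerivAt (fun t => μ / 2 * ‖l t‖ ^ 2) (μ / 2 * (⟪l t, v⟫ + ⟪v, l t⟫)) t := by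
      convert h2 using 2 with t
      rw [real_inner_self_eq_norm_sq]
    have h3 := h1.sub h2'
    show HasDerivAt φ (⟪w (l t), v⟫ - μ / 2 * (⟪l t, v⟫ + ⟪v, l t⟫)) t
    rw [hinner_eq]
    exact h3
  have hmono : Monotone ψ := by
    have hd : ∀ t : ℝ, DifferentiableAt ℝ φ t := fun t => (hφ' t).differentiableAt
    have := hφconv.monotoneOn_deriv (fun t _ => hd t)
    have heq : deriv φ = ψ := funext fun t => (hφ' t).deriv
    rw [heq] at this
    exact monotoneOn_univ.1 this
  have hl0 : l 0 = y₀ := by simp [hldef]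
  have hψ' : HasDerivAt ψ (⟪(fderiv ℝ w y₀) v, v⟫ - μ * ⟪v, v⟫) 0 := by
    have hwd : HasDerivAt (fun t => w (l t)) ((fderiv ℝ w y₀) v) 0 := by
      have := ((hgrad.differentiable one_ne_zero (l 0)).hasFDerivAt).comp_hasDerivAt 0 (hl 0)
      rwa [hl0] at this
    have h1 : HasDerivAt (fun t => (⟪w (l t), v⟫ : ℝ)) (⟪(fderiv ℝ w y₀) v, v⟫) 0 := by
      have := hwd.inner ℝ (hasDerivAt_const (0:ℝ) v)
      simpa using this
    have h2 : HasDerivAt (fun t => μ / 2 * ((⟪l t, v⟫ : ℝ) + ⟪v, l t⟫)) (μ * ⟪v, v⟫) 0 := by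
      have ha : HasDerivAt (fun t => (⟪l t, v⟫ : ℝ)) (⟪v, v⟫) 0 := by
        simpa using (hl 0).inner ℝ (hasDerivAt_const (0:ℝ) v)
      have hb : HasDerivAt (fun t => (⟪v, l t⟫ : ℝ)) (⟪v, v⟫) 0 := by
        simpa using (hasDerivAt_const (0:ℝ) v).inner ℝ (hl 0)
      have := (ha.add hb).const_mul (μ / 2)
      rw [show μ * ⟪v, v⟫ = μ / 2 * (⟪v, v⟫ + ⟪v, v⟫) by ring]
      exact this
    exact h1.sub h2
  have h0 := aux_deriv_nonneg_of_monotone hmono hψ'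
  rw [real_inner_self_eq_norm_sq] at h0
  linarith

lemma aux_symm {E : Type*} [NormedAddCommGroup E] [InnerProductSpace ℝ E]
    [FiniteDimensional ℝ E]
    (g : E → ℝ) (hg : ContDiff ℝ 2 g) (y₀ : E) (u w : E) :
    ⟪(fderiv ℝ (fun y => gradient g y) y₀) u, w⟫
      = ⟪u, (fderiv ℝ (fun y => gradient g y) y₀) w⟫ := by
  set T : (E →L[ℝ] ℝ) →L[ℝ] E :=
    ((toDual ℝ E).symm.toContinuousLinearEquiv.toContinuousLinearMap) with hT
  have hgrad : (fun y => gradient g y) = fun y => T (fderiv ℝ g y) := rfl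
  have hdd : DifferentiableAt ℝ (fderiv ℝ g) y₀ :=
    (hg.fderiv_right (m := 1) (by norm_num)).differentiable one_ne_zero y₀
  have hH : fderiv ℝ (fun y => gradient g y) y₀
      = T.comp (fderiv ℝ (fderiv ℝ g) y₀) := by
    rw [hgrad]
    exact (T.hasFDerivAt.comp y₀ hdd.hasFDerivAt).fderiv
  have hsymm := (hg.contDiffAt (x := y₀)).isSymmSndFDerivAt (by simp)
  have hTval : ∀ (ℓ : E →L[ℝ] ℝ) (z : E), ⟪T ℓ, z⟫ = ℓ z := by
    intro ℓ z
    simp [hT, toDual_symm_apply]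
  rw [hH]
  simp only [ContinuousLinearMap.comp_apply]
  rw [hTval, real_inner_comm, hTval]
  exact hsymm u w

/-- Hyper-gradient formula (Lemma 4): `Φ(x) := θ(x, y*(x))` is differentiable and
`∇Φ(x) = ∇ₓθ(x, y*(x)) − (∂ₓ(∇_y s)(y*(x), x))* ∘ (∇²_{yy} s(y*(x), x))⁻¹ (∇_y θ(x, y*(x)))`. -/
theorem stmt2
    {E F : Type*} [NormedAddCommGroup E] [InnerProductSpace ℝ E] [FiniteDimensional ℝ E]
    [NormedAddCommGroup F] [InnerProductSpace ℝ F] [FiniteDimensional ℝ F]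
    (s : E × F → ℝ) (μ : ℝ) (hμ : 0 < μ)
    (hs : ContDiff ℝ 2 s)
    (hconv : ∀ x : F, ConvexOn ℝ Set.univ (fun y : E => s (y, x) - μ / 2 * ‖y‖ ^ 2))
    (ystar : F → E) (hy : Differentiable ℝ ystar)
    (hopt : ∀ x : F, gradient (fun y => s (y, x)) (ystar x) = 0)
    (θ : F × E → ℝ) (hθ : ContDiff ℝ 1 θ) (x : F) :
    ∃ Hinv : E →L[ℝ] E,
      (fderiv ℝ (fun y => gradient (fun y' => s (y', x)) y) (ystar x)).comp Hinv
          = ContinuousLinearMap.id ℝ E ∧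
      Hinv.comp (fderiv ℝ (fun y => gradient (fun y' => s (y', x)) y) (ystar x))
          = ContinuousLinearMap.id ℝ E ∧
      DifferentiableAt ℝ (fun x' => θ (x', ystar x')) x ∧
      gradient (fun x' => θ (x', ystar x')) x
        = gradient (fun x' => θ (x', ystar x)) x
          - (ContinuousLinearMap.adjoint
              (fderiv ℝ (fun x' => gradient (fun y' => s (y', x')) (ystar x)) x))
            (Hinv (gradient (fun y => θ (x, y)) (ystar x))) := by
  have hsd : Differentiable ℝ s := hs.differentiable (by norm_num)
  have hθd : Differentiable ℝ θ := hθ.differentiable one_ne_zero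
  set T : (E →L[ℝ] ℝ) →L[ℝ] E :=
    ((toDual ℝ E).symm.toContinuousLinearEquiv.toContinuousLinearMap) with hT
  set G : E × F → E := fun p => T ((fderiv ℝ s p).comp (inl ℝ E F)) with hGdef
  have hA1 : ∀ (y : E) (x' : F), gradient (fun y' => s (y', x')) y = G (y, x') := by
    intro y x'
    have h1 : HasFDerivAt (fun y' : E => (y', x')) (inl ℝ E F) y := hasFDerivAt_prodMk_left y x'
    have h3 : HasFDerivAt (fun y' => s (y', x')) ((fderiv ℝ s (y, x')).comp (inl ℝ E F)) y :=
      (hsd (y, x')).hasFDerivAt.comp y h1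
    rw [gradient, h3.fderiv]
    rfl
  have hG : ContDiff ℝ 1 G := by
    have h1 : ContDiff ℝ 1 (fderiv ℝ s) := hs.fderiv_right (by norm_num)
    have h2 : ContDiff ℝ 1 (fun p : E × F => (fderiv ℝ s p).comp (inl ℝ E F)) :=
      ((compL ℝ E (E × F) ℝ).flip (inl ℝ E F)).contDiff.comp h1
    exact T.contDiff.comp h2
  have hGd : Differentiable ℝ G := hG.differentiable one_ne_zero
  set y₀ := ystar x with hy₀
  have hg2 : ContDiff ℝ 2 (fun y : E => s (y, x)) := hs.comp (contDiff_id.prodMk contDiff_const)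
  set H : E →L[ℝ] E := fderiv ℝ (fun y => gradient (fun y' => s (y', x)) y) y₀ with hHdef
  have hcoer : ∀ v : E, μ * ‖v‖ ^ 2 ≤ ⟪H v, v⟫ :=
    fun v => aux_coercive (fun y => s (y, x)) μ hg2 (hconv x) y₀ v
  have hsy : ∀ u w : E, ⟪H u, w⟫ = ⟪u, H w⟫ := aux_symm (fun y => s (y, x)) hg2 y₀
  -- invertibility
  have hker : ∀ z : E, H z = 0 → z = 0 := by
    intro z hz
    have h1 := hcoer z
    rw [hz, inner_zero_left] at h1
    have h2 : ‖z‖ ^ 2 ≤ 0 := by nlinarith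
    have h3 : ‖z‖ = 0 := by nlinarith [norm_nonneg z, sq_nonneg ‖z‖]
    simpa using h3
  have hinj : Function.Injective H := by
    intro u v huv
    have : H (u - v) = 0 := by rw [map_sub, huv, sub_self]
    have := hker _ this
    rwa [sub_eq_zero] at this
  have hsurj : Function.Surjective H := by
    have := (LinearMap.injective_iff_surjective (f := (H : E →ₗ[ℝ] E))).1 hinj
    exact this
  set e : E ≃L[ℝ] E := ContinuousLinearEquiv.ofBijective H
    (LinearMap.ker_eq_bot.2 hinj) (LinearMap.range_eq_top.2 hsurj) with he
  have heH : ∀ z : E, e z = H z := fun z => rfl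
  set Hinv : E →L[ℝ] E := (e.symm : E →L[ℝ] E) with hHinv
  have hid1 : H.comp Hinv = ContinuousLinearMap.id ℝ E := by
    ext v
    simp only [ContinuousLinearMap.comp_apply, ContinuousLinearMap.id_apply, hHinv,
      ContinuousLinearEquiv.coe_coe]
    rw [← heH]
    exact e.apply_symm_apply v
  have hid2 : Hinv.comp H = ContinuousLinearMap.id ℝ E := by
    ext v
    simp only [ContinuousLinearMap.comp_apply, ContinuousLinearMap.id_apply, hHinv,
      ContinuousLinearEquiv.coe_coe]
    rw [← heH]
    exact e.symm_apply_apply v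
  have hHinvH : ∀ z : E, Hinv (H z) = z := by
    intro z
    have := congrArg (fun (L : E →L[ℝ] E) => L z) hid2
    simpa using this
  have hHHinv : ∀ z : E, H (Hinv z) = z := by
    intro z
    have := congrArg (fun (L : E →L[ℝ] E) => L z) hid1
    simpa using this
  have hinvsym : ∀ u w : E, ⟪Hinv u, w⟫ = ⟪u, Hinv w⟫ := by
    intro u w
    calc ⟪Hinv u, w⟫ = ⟪Hinv u, H (Hinv w)⟫ := by rw [hHHinv]
      _ = ⟪H (Hinv u), Hinv w⟫ := (hsy _ _).symm
      _ = ⟪u, Hinv w⟫ := by rw [hHHinv]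
  -- implicit differentiation
  set DG : E × F →L[ℝ] E := fderiv ℝ G (y₀, x) with hDG
  set D : F →L[ℝ] E := fderiv ℝ ystar x with hD
  have hDy : HasFDerivAt ystar D x := (hy x).hasFDerivAt
  have hGc : (fun x' => G (ystar x', x')) = fun _ : F => (0 : E) := by
    funext x'
    rw [← hA1]
    exact hopt x'
  have hc : HasFDerivAt (fun x' => (ystar x', x'))
      (D.prod (ContinuousLinearMap.id ℝ F)) x := hDy.prodMk (hasFDerivAt_id x)
  have hcomp : HasFDerivAt (fun x' => G (ystar x', x'))
      (DG.comp (D.prod (ContinuousLinearMap.id ℝ F))) x :=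
    (hGd _).hasFDerivAt.comp x hc
  have hzero : DG.comp (D.prod (ContinuousLinearMap.id ℝ F)) = 0 := by
    rw [← hcomp.fderiv, hGc]
    exact fderiv_const_apply 0
  have hfun1 : (fun y => gradient (fun y' => s (y', x)) y) = fun y => G (y, x) :=
    funext fun y => hA1 y x
  have hHeq : H = DG.comp (inl ℝ E F) := by
    rw [hHdef, hfun1]
    exact ((hGd _).hasFDerivAt.comp y₀ (hasFDerivAt_prodMk_left y₀ x)).fderiv
  have hfun2 : (fun x' => gradient (fun y' => s (y', x')) y₀) = fun x' => G (y₀, x') :=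
    funext fun x' => hA1 y₀ x'
  set A : F →L[ℝ] E := fderiv ℝ (fun x' => gradient (fun y' => s (y', x')) y₀) x with hAdef
  have hAeq : A = DG.comp (inr ℝ E F) := by
    rw [hAdef, hfun2]
    exact ((hGd _).hasFDerivAt.comp x (hasFDerivAt_prodMk_right y₀ x)).fderiv
  have hrel : ∀ v : F, D v = - Hinv (A v) := by
    intro v
    have h0 : DG (D v, v) = 0 := by
      have := congrArg (fun (L : F →L[ℝ] E) => L v) hzero
      simpa using this
    have h1 : H (D v) + A v = 0 := by
      rw [hHeq, hAeq]
      simp only [ContinuousLinearMap.comp_apply, inl_apply, inr_apply]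
      rw [← map_add]
      simpa using h0
    have h2 : H (D v) = - A v := by
      rw [eq_neg_iff_add_eq_zero]
      exact h1
    calc D v = Hinv (H (D v)) := (hHinvH (D v)).symm
      _ = Hinv (-A v) := by rw [h2]
      _ = - Hinv (A v) := map_neg _ _
  -- chain rule for Φ
  set L : F × E →L[ℝ] ℝ := fderiv ℝ θ (x, y₀) with hL
  have hm : HasFDerivAt (fun x' => (x', ystar x')) ((ContinuousLinearMap.id ℝ F).prod D) x :=
    (hasFDerivAt_id x).prodMk hDy
  have hΦ : HasFDerivAt (fun x' => θ (x', ystar x'))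
      (L.comp ((ContinuousLinearMap.id ℝ F).prod D)) x :=
    (hθd _).hasFDerivAt.comp x hm
  have hdiffΦ : DifferentiableAt ℝ (fun x' => θ (x', ystar x')) x := hΦ.differentiableAt
  refine ⟨Hinv, hid1, hid2, hdiffΦ, ?_⟩
  have ha : ∀ v : F, ⟪gradient (fun x' => θ (x', y₀)) x, v⟫ = L (v, 0) := by
    intro v
    have h3 : HasFDerivAt (fun x' => θ (x', y₀)) (L.comp (inl ℝ F E)) x :=
      (hθd _).hasFDerivAt.comp x (hasFDerivAt_prodMk_left x y₀)
    rw [gradient, toDual_symm_apply, h3.fderiv]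
    simp
  have hb : ∀ u : E, ⟪gradient (fun y => θ (x, y)) y₀, u⟫ = L (0, u) := by
    intro u
    have h3 : HasFDerivAt (fun y => θ (x, y)) (L.comp (inr ℝ F E)) y₀ :=
      (hθd _).hasFDerivAt.comp y₀ (hasFDerivAt_prodMk_right x y₀)
    rw [gradient, toDual_symm_apply, h3.fderiv]
    simp
  apply ext_inner_right ℝ
  intro v
  rw [gradient, toDual_symm_apply, hΦ.fderiv]
  rw [inner_sub_left, ha v, ContinuousLinearMap.adjoint_inner_left]
  have hsplit : (L.comp ((ContinuousLinearMap.id ℝ F).prod D)) v = L (v, 0) + L (0, D v) := by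
    simp only [ContinuousLinearMap.comp_apply, ContinuousLinearMap.prod_apply,
      ContinuousLinearMap.id_apply]
    rw [← map_add]
    congr 1
    simp
  rw [hsplit]
  congr 1
  rw [← hb (D v), hrel v, inner_neg_right, ← hinvsym, real_inner_comm]
end

section
/- Let H be an n×n real symmetric matrix and μ > 0, γ > 0 be such that H − μI is positive semidefinite and I − γH is positive semidefinite (so all eigenvalues of H lie in [μ, 1/γ]; in particular H is invertible and γμ ≤ 1). Let J be an m×n real matrix and define the iteration Z_d = Z_{d−1} − γ(Z_{d−1} H − J) for d = 1, …, D from an arbitrary m×n real matrix Z_0. Then ‖Z_D − J H⁻¹‖_F ≤ (√n (1 − γμ))^D ‖Z_0 − J H⁻¹‖_F. -/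
open scoped BigOperators
open Matrix

/-- The Frobenius norm of a real matrix. -/
noncomputable def frobNorm {m n : ℕ} (A : Matrix (Fin m) (Fin n) ℝ) : ℝ :=
  Real.sqrt (∑ i, ∑ j, (A i j) ^ 2)

/-- Local Jacobian–Hessian-inverse approximation (Lemma 6): if all eigenvalues of the
symmetric matrix `H` lie in `[μ, 1/γ]`, the iteration `Z_d = Z_{d−1} − γ(Z_{d−1}H − J)`
satisfies `‖Z_D − JH⁻¹‖_F ≤ (√n (1 − γμ))^D ‖Z_0 − JH⁻¹‖_F`. -/
theorem stmt4
    {m n : ℕ} (H : Matrix (Fin n) (Fin n) ℝ) (μ γ : ℝ) (hμ : 0 < μ) (hγ : 0 < γ)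
    (hsymm : H.IsSymm)
    (hlow : (H - μ • (1 : Matrix (Fin n) (Fin n) ℝ)).PosSemidef)
    (hupp : ((1 : Matrix (Fin n) (Fin n) ℝ) - γ • H).PosSemidef)
    (J : Matrix (Fin m) (Fin n) ℝ)
    (Z : ℕ → Matrix (Fin m) (Fin n) ℝ)
    (hrec : ∀ d : ℕ, Z (d + 1) = Z d - γ • (Z d * H - J))
    (D : ℕ) :
    frobNorm (Z D - J * H⁻¹) ≤
      (Real.sqrt (n : ℝ) * (1 - γ * μ)) ^ D * frobNorm (Z 0 - J * H⁻¹) := by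
  rcases Nat.eq_zero_or_pos n with hn | hn
  · subst hn
    simp [frobNorm]
  -- n ≥ 1
  set c : ℝ := 1 - γ * μ with hc_def
  set M : Matrix (Fin n) (Fin n) ℝ := (1 : Matrix (Fin n) (Fin n) ℝ) - γ • H with hM_def
  -- scalar facts from the PSD hypotheses
  have fact1 : ∀ x : Fin n → ℝ, μ * (x ⬝ᵥ x) ≤ x ⬝ᵥ (H *ᵥ x) := by
    intro x
    have h := hlow.dotProduct_mulVec_nonneg x
    simp only [star_trivial, Matrix.sub_mulVec, Matrix.smul_mulVec, Matrix.one_mulVec,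
      dotProduct_sub, dotProduct_smul, smul_eq_mul] at h
    linarith
  have fact2 : ∀ x : Fin n → ℝ, γ * (x ⬝ᵥ (H *ᵥ x)) ≤ x ⬝ᵥ x := by
    intro x
    have h := hupp.dotProduct_mulVec_nonneg x
    simp only [hM_def, star_trivial, Matrix.sub_mulVec, Matrix.smul_mulVec,
      Matrix.one_mulVec, dotProduct_sub, dotProduct_smul, smul_eq_mul] at h
    linarith
  -- 0 ≤ c
  have hc : 0 ≤ c := by
    have hne : Nonempty (Fin n) := ⟨⟨0, hn⟩⟩
    set x : Fin n → ℝ := Pi.single ⟨0, hn⟩ 1 with hx_def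
    have hxx : x ⬝ᵥ x = 1 := by
      simp [hx_def, dotProduct, Pi.single_apply]
    have h1 := fact1 x
    have h2 := fact2 x
    rw [hxx] at h1 h2
    have : γ * (μ * 1) ≤ γ * (x ⬝ᵥ (H *ᵥ x)) :=
      mul_le_mul_of_nonneg_left h1 hγ.le
    simp only [hc_def]
    nlinarith
  -- the key operator inequality
  have hMpsd : M.PosSemidef := hupp
  have hcM : ((c • (1 : Matrix (Fin n) (Fin n) ℝ)) - M).PosSemidef := by
    have heq : (c • (1 : Matrix (Fin n) (Fin n) ℝ)) - M
        = γ • (H - μ • (1 : Matrix (Fin n) (Fin n) ℝ)) := by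
      rw [hM_def, hc_def]
      module
    rw [heq]
    refine Matrix.posSemidef_iff_dotProduct_mulVec.mpr ⟨?_, fun x => ?_⟩
    · rw [Matrix.IsHermitian, Matrix.conjTranspose_smul, hlow.1]
      simp
    · rw [Matrix.smul_mulVec, dotProduct_smul, smul_eq_mul]
      exact mul_nonneg hγ.le (hlow.dotProduct_mulVec_nonneg x)
  have hcM' : ∀ x : Fin n → ℝ, x ⬝ᵥ (M *ᵥ x) ≤ c * (x ⬝ᵥ x) := by
    intro x
    have h := hcM.dotProduct_mulVec_nonneg x
    simp only [star_trivial, Matrix.sub_mulVec, Matrix.smul_mulVec, Matrix.one_mulVec,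
      dotProduct_sub, dotProduct_smul, smul_eq_mul] at h
    linarith
  have key : ∀ x : Fin n → ℝ, (M *ᵥ x) ⬝ᵥ (M *ᵥ x) ≤ c ^ 2 * (x ⬝ᵥ x) := by
    intro x
    obtain ⟨S, hSpsd, hS2⟩ : ∃ S : Matrix (Fin n) (Fin n) ℝ, S.PosSemidef ∧ S * S = M := by
      open scoped MatrixOrder in
      exact ⟨CFC.sqrt M, (CFC.sqrt_nonneg M).posSemidef, CFC.sqrt_mul_sqrt_self M hMpsd.nonneg⟩
    have hSsym : Sᵀ = S := by
      have := hSpsd.1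
      rwa [Matrix.IsHermitian, Matrix.conjTranspose_eq_transpose_of_trivial] at this
    have hMsym : Mᵀ = M := by
      have := hMpsd.1
      rwa [Matrix.IsHermitian, Matrix.conjTranspose_eq_transpose_of_trivial] at this
    -- rewrite (S *ᵥ x) dot products
    have hmv : ∀ (A : Matrix (Fin n) (Fin n) ℝ) (v w : Fin n → ℝ), Aᵀ = A →
        (A *ᵥ v) ⬝ᵥ w = v ⬝ᵥ (A *ᵥ w) := by
      intro A v w hA
      have hv : v ᵥ* A = A *ᵥ v := by
        conv_lhs => rw [← hA]
        rw [Matrix.vecMul_transpose]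
      rw [Matrix.dotProduct_mulVec, hv]
    have e1 : (S *ᵥ x) ⬝ᵥ (S *ᵥ x) = x ⬝ᵥ (M *ᵥ x) := by
      rw [hmv S x (S *ᵥ x) hSsym, Matrix.mulVec_mulVec, hS2]
    have e2 : (S *ᵥ x) ⬝ᵥ (M *ᵥ (S *ᵥ x)) = x ⬝ᵥ ((M * M) *ᵥ x) := by
      rw [hmv S x (M *ᵥ (S *ᵥ x)) hSsym, Matrix.mulVec_mulVec, Matrix.mulVec_mulVec]
      have hsms : S * M * S = M * M := by rw [← hS2]; noncomm_ring
      rw [hsms]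
    have h := hcM.dotProduct_mulVec_nonneg (S *ᵥ x)
    simp only [star_trivial, Matrix.sub_mulVec, Matrix.smul_mulVec, Matrix.one_mulVec,
      dotProduct_sub, dotProduct_smul, smul_eq_mul] at h
    rw [e1, e2] at h
    -- h : x ⬝ᵥ ((M*M) *ᵥ x) ≤ c * (x ⬝ᵥ (M *ᵥ x))
    have e3 : (M *ᵥ x) ⬝ᵥ (M *ᵥ x) = x ⬝ᵥ ((M * M) *ᵥ x) := by
      rw [hmv M x (M *ᵥ x) hMsym, Matrix.mulVec_mulVec]
    have h2 := hcM' x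
    have hxx : (0:ℝ) ≤ x ⬝ᵥ x := Finset.sum_nonneg fun i _ => mul_self_nonneg (x i)
    rw [e3]
    nlinarith [mul_le_mul_of_nonneg_left h2 hc]
  -- M is symmetric entrywise
  have hMsym' : ∀ j k, M j k = M k j := by
    intro j k
    have h1 : H j k = H k j := by
      have := congrFun (congrFun hsymm k) j
      simpa [Matrix.transpose_apply] using this
    simp [hM_def, Matrix.sub_apply, Matrix.smul_apply, Matrix.one_apply, h1]
    by_cases hjk : j = k <;> simp [hjk, eq_comm]
  -- Frobenius step
  have step : ∀ E : Matrix (Fin m) (Fin n) ℝ, frobNorm (E * M) ≤ c * frobNorm E := by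
    intro E
    have hrowsum : ∀ i, ∑ j, ((E * M) i j) ^ 2 ≤ c ^ 2 * ∑ j, (E i j) ^ 2 := by
      intro i
      have hrow : ∀ j, (E * M) i j = (M *ᵥ (E i)) j := by
        intro j
        simp only [Matrix.mul_apply, Matrix.mulVec, dotProduct]
        exact Finset.sum_congr rfl fun k _ => by rw [hMsym' j k, mul_comm]
      have e1 : ∑ j, ((E * M) i j) ^ 2 = (M *ᵥ (E i)) ⬝ᵥ (M *ᵥ (E i)) := by
        simp [dotProduct, hrow, sq]
      have e2 : (E i) ⬝ᵥ (E i) = ∑ j, (E i j) ^ 2 := by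
        simp [dotProduct, sq]
      rw [e1, ← e2]
      exact key (E i)
    have hsum : ∑ i, ∑ j, ((E * M) i j) ^ 2 ≤ c ^ 2 * ∑ i, ∑ j, (E i j) ^ 2 := by
      rw [Finset.mul_sum]
      exact Finset.sum_le_sum fun i _ => hrowsum i
    have := Real.sqrt_le_sqrt hsum
    calc frobNorm (E * M) ≤ Real.sqrt (c ^ 2 * ∑ i, ∑ j, (E i j) ^ 2) := this
      _ = c * frobNorm E := by
          rw [Real.sqrt_mul (sq_nonneg c), Real.sqrt_sq hc, frobNorm]
  -- H is invertible
  have hHpd : H.PosDef := by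
    refine Matrix.posDef_iff_dotProduct_mulVec.mpr ⟨?_, fun x hx => ?_⟩
    · rw [Matrix.IsHermitian, Matrix.conjTranspose_eq_transpose_of_trivial]
      exact hsymm
    · have hxx : 0 < x ⬝ᵥ x := by
        have := (Matrix.dotProduct_star_self_pos_iff (v := x)).mpr hx
        simpa using this
      have := fact1 x
      simp only [star_trivial]
      nlinarith
  have hinv : H⁻¹ * H = 1 := Matrix.nonsing_inv_mul H hHpd.det_pos.ne'.isUnit
  -- error recursion
  have hrecE : ∀ d, Z (d + 1) - J * H⁻¹ = (Z d - J * H⁻¹) * M := by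
    intro d
    rw [hrec d, hM_def]
    rw [Matrix.sub_mul, Matrix.mul_sub, Matrix.mul_sub, Matrix.mul_one, Matrix.mul_one,
      Matrix.mul_smul, Matrix.mul_smul, Matrix.mul_assoc, hinv, Matrix.mul_one,
      smul_sub]
    abel
  -- main induction
  have main : ∀ d, frobNorm (Z d - J * H⁻¹) ≤ c ^ d * frobNorm (Z 0 - J * H⁻¹) := by
    intro d
    induction d with
    | zero => simp
    | succ d ih =>
        rw [hrecE d]
        calc frobNorm ((Z d - J * H⁻¹) * M) ≤ c * frobNorm (Z d - J * H⁻¹) := step _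
          _ ≤ c * (c ^ d * frobNorm (Z 0 - J * H⁻¹)) :=
              mul_le_mul_of_nonneg_left ih hc
          _ = c ^ (d + 1) * frobNorm (Z 0 - J * H⁻¹) := by ring
  have h1n : (1:ℝ) ≤ Real.sqrt (n : ℝ) := by
    rw [show (1:ℝ) = Real.sqrt 1 by simp]
    exact Real.sqrt_le_sqrt (by exact_mod_cast hn)
  calc frobNorm (Z D - J * H⁻¹) ≤ c ^ D * frobNorm (Z 0 - J * H⁻¹) := main D
    _ ≤ (Real.sqrt (n : ℝ) * c) ^ D * frobNorm (Z 0 - J * H⁻¹) := by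
        apply mul_le_mul_of_nonneg_right _ (Real.sqrt_nonneg _)
        exact pow_le_pow_left₀ hc (le_mul_of_one_le_left hc h1n) D
end
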